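/- arXiv:1305.2446 — 6 statements merged into one kernel-verified Lean document; each statement's English description precedes it below -/
import Mathlib

section
/- Let a ≤ b ≤ c be real numbers with b ≤ t ≤ c (t plays the role of OPT), and let p ≥ 1. Then (b - a)^p + (c - b)^p ≤ 2^(p-1) * ((t - a)^p + (c - t)^p). -/
open scoped NNReal

theorem pair_bound_opt_inside (a b c t p : ℝ) (hab : a ≤ b) (hbc : b ≤ c)
    (hbt : b ≤ t) (htc : t ≤ c) (hp : 1 ≤ p) :
    (b - a) ^ p + (c - b) ^ p ≤ 2 ^ (p - 1) * ((t - a) ^ p + (c - t) ^ p) := by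
  have h1 : (0:ℝ) ≤ b - a := by linarith
  have h2 : (0:ℝ) ≤ c - b := by linarith
  have h3 : (0:ℝ) ≤ t - a := by linarith
  have h4 : (0:ℝ) ≤ c - t := by linarith
  set x : ℝ≥0 := ⟨b - a, h1⟩
  set y : ℝ≥0 := ⟨c - b, h2⟩
  set X : ℝ≥0 := ⟨t - a, h3⟩
  set Y : ℝ≥0 := ⟨c - t, h4⟩
  have hsum : x + y = X + Y := by
    ext; show (b - a) + (c - b) = (t - a) + (c - t); ring
  have k1 : x ^ p + y ^ p ≤ (x + y) ^ p := NNReal.add_rpow_le_rpow_add x y hp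
  have k2 : (X + Y) ^ p ≤ (2 : ℝ≥0) ^ (p - 1) * (X ^ p + Y ^ p) :=
    NNReal.rpow_add_le_mul_rpow_add_rpow X Y hp
  have key : x ^ p + y ^ p ≤ (2 : ℝ≥0) ^ (p - 1) * (X ^ p + Y ^ p) := by
    calc x ^ p + y ^ p ≤ (x + y) ^ p := k1
    _ = (X + Y) ^ p := by rw [hsum]
    _ ≤ _ := k2
  have := NNReal.coe_le_coe.2 key
  push_cast at this
  exact this
end

section
/- Let n ≥ 2, let x : Fin n → ℝ be a sorted location profile (x i ≤ x j for i ≤ j), let m = x ⌈n/2⌉₋₁ be a median (the k-th smallest where k = ⌈n/2⌉), and let p ≥ 1. Then for every y ∈ ℝ, ∑ i, |m - x i|^p ≤ 2^(p-1) * ∑ i, |y - x i|^p. -/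
open Real

lemma rpow_superadd {a b p : ℝ} (ha : 0 ≤ a) (hb : 0 ≤ b) (hp : 1 ≤ p) :
    a ^ p + b ^ p ≤ (a + b) ^ p := by
  lift a to NNReal using ha
  lift b to NNReal using hb
  exact_mod_cast NNReal.add_rpow_le_rpow_add a b hp

lemma rpow_add_le {a b p : ℝ} (ha : 0 ≤ a) (hb : 0 ≤ b) (hp : 1 ≤ p) :
    (a + b) ^ p ≤ 2 ^ (p - 1) * (a ^ p + b ^ p) := by
  lift a to NNReal using ha
  lift b to NNReal using hb
  exact_mod_cast NNReal.rpow_add_le_mul_rpow_add_rpow a b hp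

lemma pair_bound {a b m y p : ℝ} (hp : 1 ≤ p) (ham : a ≤ m) (hmb : m ≤ b) :
    |m - a| ^ p + |m - b| ^ p ≤ 2 ^ (p - 1) * (|y - a| ^ p + |y - b| ^ p) := by
  have h1 : |m - a| ^ p + |m - b| ^ p ≤ (|m - a| + |m - b|) ^ p :=
    rpow_superadd (abs_nonneg _) (abs_nonneg _) hp
  have h2 : |m - a| + |m - b| = b - a := by
    rw [abs_of_nonneg (by linarith), abs_of_nonpos (by linarith)]; ring
  have h3 : b - a ≤ |y - a| + |y - b| := by
    have := abs_sub_abs_le_abs_sub (y - a) (y - b)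
    have h4 := le_abs_self (y - a)
    have h5 := neg_abs_le (y - b)
    nlinarith [abs_nonneg (y - a), abs_nonneg (y - b), le_abs_self ((y-a) - (y-b)), neg_abs_le ((y-a)-(y-b)), abs_sub_comm (y-a) (y-b)]
  calc |m - a| ^ p + |m - b| ^ p ≤ (b - a) ^ p := by rw [← h2]; exact h1
    _ ≤ (|y - a| + |y - b|) ^ p :=
        Real.rpow_le_rpow (by linarith) h3 (by linarith)
    _ ≤ 2 ^ (p - 1) * (|y - a| ^ p + |y - b| ^ p) :=
        rpow_add_le (abs_nonneg _) (abs_nonneg _) hp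

theorem median_approx (n : ℕ) (hn : 2 ≤ n) (x : Fin n → ℝ)
    (hsorted : ∀ i j : Fin n, i ≤ j → x i ≤ x j) (p : ℝ) (hp : 1 ≤ p)
    (m : ℝ) (hm : m = x ⟨(n + 1) / 2 - 1, by omega⟩) :
    ∀ y : ℝ, ∑ i, |m - x i| ^ p ≤ 2 ^ (p - 1) * ∑ i, |y - x i| ^ p := by
  intro y
  have hkn : (n + 1) / 2 - 1 < n := by omega
  set k : Fin n := ⟨(n + 1) / 2 - 1, hkn⟩ with hk
  have hmk : m = x k := by rw [hm]
  have hrev : ∀ f : Fin n → ℝ, ∑ i : Fin n, f i.rev = ∑ i : Fin n, f i := fun f =>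
    Equiv.sum_comp (Fin.revPerm) f
  have key : ∀ i : Fin n,
      |m - x i| ^ p + |m - x i.rev| ^ p ≤
        2 ^ (p - 1) * (|y - x i| ^ p + |y - x i.rev| ^ p) := by
    intro i
    have hrv : (i.rev : ℕ) = n - 1 - i := by
      simp [Fin.val_rev]; omega
    rcases le_or_gt (i : ℕ) ((n + 1) / 2 - 1) with h | h
    · have h1 : x i ≤ m := hmk ▸ hsorted i k (by rw [Fin.le_def]; exact h)
      have h2 : m ≤ x i.rev := hmk ▸ hsorted k i.rev (by rw [Fin.le_def, hrv]; simp only [hk]; omega)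
      exact pair_bound hp h1 h2
    · have h1 : x i.rev ≤ m := hmk ▸ hsorted i.rev k (by rw [Fin.le_def, hrv]; simp only [hk]; omega)
      have h2 : m ≤ x i := hmk ▸ hsorted k i (by rw [Fin.le_def]; simp only [hk]; omega)
      calc |m - x i| ^ p + |m - x i.rev| ^ p
          = |m - x i.rev| ^ p + |m - x i| ^ p := by ring
        _ ≤ 2 ^ (p - 1) * (|y - x i.rev| ^ p + |y - x i| ^ p) := pair_bound hp h1 h2
        _ = 2 ^ (p - 1) * (|y - x i| ^ p + |y - x i.rev| ^ p) := by ring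
  have hsum : 2 * ∑ i, |m - x i| ^ p ≤ 2 * (2 ^ (p - 1) * ∑ i, |y - x i| ^ p) := by
    calc 2 * ∑ i, |m - x i| ^ p
        = (∑ i, |m - x i| ^ p) + ∑ i, |m - x (Fin.rev i)| ^ p := by
          rw [hrev fun i => |m - x i| ^ p]; ring
      _ = ∑ i, (|m - x i| ^ p + |m - x i.rev| ^ p) := by rw [Finset.sum_add_distrib]
      _ ≤ ∑ i, 2 ^ (p - 1) * (|y - x i| ^ p + |y - x i.rev| ^ p) :=
          Finset.sum_le_sum fun i _ => key i
      _ = 2 ^ (p - 1) * ((∑ i, |y - x i| ^ p) + ∑ i, |y - x (Fin.rev i)| ^ p) := by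
          rw [← Finset.mul_sum, Finset.sum_add_distrib]
      _ = 2 * (2 ^ (p - 1) * ∑ i, |y - x i| ^ p) := by
          rw [hrev fun i => |y - x i| ^ p]; ring
  linarith
end

section
/- Fix p > 1. There is no deterministic strategyproof mechanism for 2 agents on ℝ whose approximation ratio for the L_p social cost is strictly less than 2^(1-1/p). Formally: there is no function f : ℝ × ℝ → ℝ such that (i) for all x₁, x₂, x₁' : (choosing z = f(x₁,x₂)) |x₁ - f(x₁,x₂)| ≤ |x₁ - f(x₁',x₂)| and symmetrically for agent 2, and (ii) there exists r < 2^(1-1/p) with (|f(x₁,x₂)-x₁|^p + |f(x₁,x₂)-x₂|^p)^(1/p) ≤ r * inf_y (|y-x₁|^p + |y-x₂|^p)^(1/p) for all x₁, x₂. -/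
theorem no_good_deterministic_sp_mechanism (p : ℝ) (hp : 1 < p) :
    ¬ ∃ f : ℝ → ℝ → ℝ,
      (∀ x₁ x₂ x₁' : ℝ, |x₁ - f x₁ x₂| ≤ |x₁ - f x₁' x₂|) ∧
      (∀ x₁ x₂ x₂' : ℝ, |x₂ - f x₁ x₂| ≤ |x₂ - f x₁ x₂'|) ∧
      (∃ r : ℝ, r < 2 ^ (1 - 1 / p) ∧
        ∀ x₁ x₂ : ℝ,
          (|f x₁ x₂ - x₁| ^ p + |f x₁ x₂ - x₂| ^ p) ^ (1 / p)
            ≤ r * ⨅ y : ℝ, (|y - x₁| ^ p + |y - x₂| ^ p) ^ (1 / p)) := by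
  rintro ⟨f, h1, _h2, r, hr, hratio⟩
  have hp0 : (0:ℝ) < p := by linarith
  have hip : (0:ℝ) < 1/p := by positivity
  have hpow : ∀ x : ℝ, 0 ≤ x → (x ^ p) ^ (1/p) = x := by
    intro x hx
    rw [← Real.rpow_mul hx, mul_one_div_cancel hp0.ne', Real.rpow_one]
  set K : ℝ := (2:ℝ) ^ (1/p - 1) with hKdef
  have hK : 0 < K := Real.rpow_pos_of_pos two_pos _
  have hK1 : (2:ℝ) ^ (1 - 1/p) * K = 1 := by
    rw [hKdef, ← Real.rpow_add two_pos]
    norm_num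
  have hval : ∀ c : ℝ, 0 ≤ c → (c ^ p + c ^ p) ^ (1/p) = 2 * c * K := by
    intro c hc
    have h2c : c ^ p + c ^ p = 2 * c ^ p := by ring
    rw [h2c, Real.mul_rpow (by norm_num) (Real.rpow_nonneg hc _), hpow c hc,
      hKdef, Real.rpow_sub two_pos, Real.rpow_one]
    ring
  have hbdd : ∀ x₁ x₂ : ℝ,
      BddBelow (Set.range fun y => (|y - x₁| ^ p + |y - x₂| ^ p) ^ (1/p)) := by
    intro x₁ x₂
    exact ⟨0, by rintro _ ⟨y, rfl⟩; positivity⟩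
  have hlow : ∀ y : ℝ, (1:ℝ)/2 ≤ (|y - 0| ^ p + |y - 1| ^ p) ^ (1/p) := by
    intro y
    have habs : (1/2:ℝ) ^ p ≤ |y - 0| ^ p + |y - 1| ^ p := by
      rcases le_or_gt y (1/2) with h | h
      · have hy1 : (1/2:ℝ) ≤ |y - 1| := by
          have : 1 - y ≤ |y - 1| := by rw [abs_sub_comm]; exact le_abs_self _
          linarith
        have := Real.rpow_le_rpow (by norm_num) hy1 hp0.le
        have h0 : (0:ℝ) ≤ |y - 0| ^ p := by positivity
        linarith
      · have hy0 : (1/2:ℝ) ≤ |y - 0| := by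
          have : y - 0 ≤ |y - 0| := le_abs_self _
          linarith
        have := Real.rpow_le_rpow (by norm_num) hy0 hp0.le
        have h0 : (0:ℝ) ≤ |y - 1| ^ p := by positivity
        linarith
    calc (1:ℝ)/2 = ((1/2:ℝ) ^ p) ^ (1/p) := (hpow _ (by norm_num)).symm
      _ ≤ _ := Real.rpow_le_rpow (by positivity) habs hip.le
  set a : ℝ := f 0 1 with ha_def
  set I₀ : ℝ := ⨅ y : ℝ, (|y - 0| ^ p + |y - 1| ^ p) ^ (1/p) with hI0_def
  have hI0ge : (1:ℝ)/2 ≤ I₀ := le_ciInf hlow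
  have hI0le : I₀ ≤ K := by
    have h := ciInf_le (hbdd 0 1) (1/2 : ℝ)
    have e1 : |(1/2:ℝ) - 0| = 1/2 := by norm_num
    have e2 : |(1/2:ℝ) - 1| = 1/2 := by rw [abs_sub_comm]; norm_num
    rw [e1, e2, hval (1/2) (by norm_num)] at h
    calc I₀ ≤ 2 * (1/2 : ℝ) * K := h
      _ = K := by ring
  have hcost0 := hratio 0 1
  rw [← ha_def, ← hI0_def] at hcost0
  have hc0low : (1:ℝ)/2 ≤ (|a - 0| ^ p + |a - 1| ^ p) ^ (1/p) := hlow a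
  have hr0 : 0 < r := by nlinarith
  have hcost1 : (|a - 0| ^ p + |a - 1| ^ p) ^ (1/p) < 1 := by
    calc (|a - 0| ^ p + |a - 1| ^ p) ^ (1/p) ≤ r * I₀ := hcost0
      _ ≤ r * K := by nlinarith
      _ < 2 ^ (1 - 1/p) * K := by nlinarith
      _ = 1 := hK1
  have ha1 : a < 1 := by
    by_contra h
    push_neg at h
    have hy0 : (1:ℝ) ≤ |a - 0| := by
      rw [abs_of_nonneg (by linarith)]; linarith
    have h1p : (1:ℝ) ≤ |a - 0| ^ p := by
      calc (1:ℝ) = 1 ^ p := (Real.one_rpow p).symm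
        _ ≤ _ := Real.rpow_le_rpow (by norm_num) hy0 hp0.le
    have h2p : (0:ℝ) ≤ |a - 1| ^ p := by positivity
    have : (1:ℝ) ≤ (|a - 0| ^ p + |a - 1| ^ p) ^ (1/p) := by
      calc (1:ℝ) = (1:ℝ) ^ (1/p) := (Real.one_rpow _).symm
        _ ≤ _ := Real.rpow_le_rpow (by norm_num) (by linarith) hip.le
    linarith
  have hfa : f a 1 = a := by
    have h := h1 a 1 0
    rw [← ha_def, sub_self, abs_zero] at h
    have heq := abs_eq_zero.mp (le_antisymm h (abs_nonneg _))
    linarith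
  have hcost2 := hratio a 1
  rw [hfa] at hcost2
  have hL : (|a - a| ^ p + |a - 1| ^ p) ^ (1/p) = 1 - a := by
    rw [sub_self, abs_zero, Real.zero_rpow hp0.ne', zero_add,
      hpow _ (abs_nonneg _), abs_of_neg (by linarith : a - 1 < 0)]
    ring
  rw [hL] at hcost2
  set I₂ : ℝ := ⨅ y : ℝ, (|y - a| ^ p + |y - 1| ^ p) ^ (1/p) with hI2_def
  have hI2le : I₂ ≤ (1 - a) * K := by
    have h := ciInf_le (hbdd a 1) ((a + 1)/2 : ℝ)
    have e1 : |(a + 1)/2 - a| = (1 - a)/2 := by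
      have : (a + 1)/2 - a = (1 - a)/2 := by ring
      rw [this, abs_of_nonneg (by linarith)]
    have e2 : |(a + 1)/2 - 1| = (1 - a)/2 := by
      have : (a + 1)/2 - 1 = -((1 - a)/2) := by ring
      rw [this, abs_neg, abs_of_nonneg (by linarith)]
    rw [e1, e2, hval ((1 - a)/2) (by linarith)] at h
    calc I₂ ≤ 2 * ((1 - a)/2) * K := h
      _ = (1 - a) * K := by ring
  have hfin : r * I₂ < 1 - a := by
    have h3 : 0 < (1 - a) * K := by
      have : 0 < 1 - a := by linarith
      positivity
    calc r * I₂ ≤ r * ((1 - a) * K) := by nlinarith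
      _ < 2 ^ (1 - 1/p) * ((1 - a) * K) := by nlinarith
      _ = (1 - a) * (2 ^ (1 - 1/p) * K) := by ring
      _ = 1 - a := by rw [hK1]; ring
  linarith
end

section
/- For every integer p > 2, integer k ≥ 1, and integer j with k^(1/(p-1)) + 1 ≤ j ≤ k, setting Q = 2^(p-1), one has j·(Q(j−1))^(p−1) − (k − j + 1) − (j − 1)·(1 + Q(j−1))^(p−1) > 0. -/
lemma add_pow_le_aux (a b : ℝ) (ha : 0 ≤ a) (hab : a ≤ b) :
    ∀ n : ℕ, (a + b) ^ (n + 1) ≤ b ^ (n + 1) + (2 ^ (n + 1) - 1) * a * b ^ n := by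
  intro n
  induction n with
  | zero => simp; nlinarith
  | succ n ih =>
    have hb : 0 ≤ b := le_trans ha hab
    have hbn : 0 ≤ b ^ n := pow_nonneg hb n
    have h2 : (1 : ℝ) ≤ 2 ^ (n + 1) := one_le_pow₀ (by norm_num)
    calc (a + b) ^ (n + 2) = (a + b) ^ (n + 1) * (a + b) := by ring
    _ ≤ (b ^ (n + 1) + (2 ^ (n + 1) - 1) * a * b ^ n) * (a + b) := by
        apply mul_le_mul_of_nonneg_right ih (by linarith)
    _ ≤ b ^ (n + 2) + (2 ^ (n + 2) - 1) * a * b ^ (n + 1) := by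
        have key : a * a * b ^ n ≤ a * b * b ^ n := by
          apply mul_le_mul_of_nonneg_right _ hbn
          exact mul_le_mul_of_nonneg_left hab ha
        have h3 : (2 ^ (n + 1) - 1) * (a * a * b ^ n) ≤ (2 ^ (n + 1) - 1) * (a * b * b ^ n) :=
          mul_le_mul_of_nonneg_left key (by linarith)
        simp only [pow_succ] at h3 ⊢
        nlinarith [h3, mul_nonneg ha hbn]

theorem g_positive_at_Q (p k j : ℕ) (hp : 2 < p) (hk : 1 ≤ k) (hjk : j ≤ k)
    (hj : (k : ℝ) ^ ((1 : ℝ) / ((p : ℝ) - 1)) + 1 ≤ (j : ℝ)) :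
    0 < (j : ℝ) * ((2 ^ (p - 1) : ℝ) * ((j : ℝ) - 1)) ^ (p - 1)
        - ((k : ℝ) - (j : ℝ) + 1)
        - ((j : ℝ) - 1) * (1 + (2 ^ (p - 1) : ℝ) * ((j : ℝ) - 1)) ^ (p - 1) := by
  obtain ⟨m, hm⟩ : ∃ m, p - 1 = m + 1 := ⟨p - 2, by omega⟩
  set x : ℝ := (j : ℝ) - 1 with hxdef
  set Q : ℝ := (2 : ℝ) ^ (p - 1) with hQdef
  have hk0 : (0 : ℝ) ≤ (k : ℝ) := Nat.cast_nonneg k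
  have hpr : ((p : ℝ) - 1) = ((p - 1 : ℕ) : ℝ) := by
    rw [Nat.cast_sub (by omega)]; norm_num
  have hexp : (0 : ℝ) < (p : ℝ) - 1 := by
    rw [hpr, hm]; positivity
  have hrpow1 : (1 : ℝ) ≤ (k : ℝ) ^ ((1 : ℝ) / ((p : ℝ) - 1)) := by
    apply Real.one_le_rpow (by exact_mod_cast hk) (by positivity)
  have hx1 : (1 : ℝ) ≤ x := by simp only [hxdef]; linarith
  have hx0 : (0 : ℝ) ≤ x := by linarith
  -- x ^ (p-1) ≥ k
  have hxq : (k : ℝ) ≤ x ^ (p - 1) := by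
    have h1 : (k : ℝ) ^ ((1 : ℝ) / ((p : ℝ) - 1)) ≤ x := by
      simp only [hxdef]; linarith
    have h2 : ((k : ℝ) ^ ((1 : ℝ) / ((p : ℝ) - 1))) ^ (p - 1) ≤ x ^ (p - 1) :=
      pow_le_pow_left₀ (Real.rpow_nonneg hk0 _) h1 _
    calc (k : ℝ) = ((k : ℝ) ^ ((1 : ℝ) / ((p : ℝ) - 1))) ^ (p - 1) := by
          rw [← Real.rpow_natCast ((k : ℝ) ^ ((1 : ℝ) / ((p : ℝ) - 1))) (p - 1),
            ← Real.rpow_mul hk0, ← hpr]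
          rw [one_div, inv_mul_cancel₀ (ne_of_gt hexp), Real.rpow_one]
      _ ≤ x ^ (p - 1) := h2
  have hQ1 : (1 : ℝ) ≤ Q := one_le_pow₀ (by norm_num)
  have hQ2 : (2 : ℝ) ^ (m + 1) = Q := by rw [hQdef, hm]
  have hQx1 : (1 : ℝ) ≤ Q * x := by nlinarith
  -- key bound
  have hkey : (1 + Q * x) ^ (m + 1) ≤ (Q * x) ^ (m + 1) + (Q - 1) * (Q * x) ^ m := by
    have := add_pow_le_aux 1 (Q * x) (by norm_num) hQx1 m
    rw [hQ2] at this
    linarith [this]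
  -- x * (Q*x)^m ≥ k
  have hP : (k : ℝ) ≤ x * (Q * x) ^ m := by
    have hxm : x ^ m ≤ (Q * x) ^ m := pow_le_pow_left₀ hx0 (by nlinarith) m
    have : x * x ^ m ≤ x * (Q * x) ^ m := mul_le_mul_of_nonneg_left hxm hx0
    have hxq' : (k : ℝ) ≤ x ^ (m + 1) := by rw [← hm]; exact hxq
    rw [pow_succ, mul_comm] at hxq'
    linarith
  rw [hm]
  have hpow : (Q * x) ^ (m + 1) = (Q * x) * (Q * x) ^ m := by rw [pow_succ]; ring
  have hQxm : (0 : ℝ) ≤ (Q * x) ^ m := pow_nonneg (by linarith) m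
  have hj' : (j : ℝ) = x + 1 := by simp [hxdef]
  rw [hj']
  nlinarith [mul_le_mul_of_nonneg_left hkey hx0]
end

section
/- Fix p ≥ 1. The LRM mechanism for two agents at x₁ < x₂, which places probability 1/4 at x₁, 1/4 at x₂, and 1/2 at (x₁+x₂)/2, has expected social cost exactly ((2^(1−1/p) + 1)/2) times the optimal social cost for every two-agent profile. -/
theorem lrm_expected_cost (p x₁ x₂ : ℝ) (hp : 1 ≤ p) (hx : x₁ < x₂) :
    (1 / 4) * ((|x₁ - x₁| ^ p + |x₁ - x₂| ^ p) ^ (1 / p))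
      + (1 / 4) * ((|x₂ - x₁| ^ p + |x₂ - x₂| ^ p) ^ (1 / p))
      + (1 / 2) * ((|(x₁ + x₂) / 2 - x₁| ^ p + |(x₁ + x₂) / 2 - x₂| ^ p) ^ (1 / p))
    = ((2 ^ (1 - 1 / p) + 1) / 2) * (|x₂ - x₁| * 2 ^ (1 / p - 1)) := by
  have hp0 : p ≠ 0 := by linarith
  set d := x₂ - x₁ with hd
  have hdpos : 0 < d := by simp [hd]; linarith
  have h1 : |x₁ - x₁| = 0 := by simp
  have h2 : |x₁ - x₂| = d := by rw [abs_sub_comm]; exact abs_of_pos hdpos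
  have h3 : |x₂ - x₁| = d := abs_of_pos hdpos
  have h4 : |x₂ - x₂| = 0 := by simp
  have h5 : |(x₁ + x₂) / 2 - x₁| = d / 2 := by
    rw [abs_of_pos (by simp [hd]; linarith)]; rw [hd]; ring
  have h6 : |(x₁ + x₂) / 2 - x₂| = d / 2 := by
    rw [abs_of_neg (by simp [hd]; linarith)]; rw [hd]; ring
  have rpow_inv : ∀ x : ℝ, 0 < x → (x ^ p) ^ (1 / p) = x := by
    intro x hx0
    rw [← Real.rpow_mul hx0.le, mul_one_div, div_self hp0, Real.rpow_one]
  have hdp : (d ^ p) ^ (1 / p) = d := rpow_inv d hdpos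
  have hzp : (0 : ℝ) ^ p = 0 := Real.zero_rpow hp0
  have hmid : ((d / 2) ^ p + (d / 2) ^ p) ^ (1 / p) = 2 ^ (1 / p) * (d / 2) := by
    have : (d / 2) ^ p + (d / 2) ^ p = 2 * (d / 2) ^ p := by ring
    rw [this, Real.mul_rpow (by norm_num) (Real.rpow_nonneg (by linarith) p),
      rpow_inv (d / 2) (by linarith)]
  have hexp : (2 : ℝ) ^ (1 - 1 / p) * 2 ^ (1 / p - 1) = 1 := by
    rw [← Real.rpow_add (by norm_num)]; norm_num
  have hexp2 : (2 : ℝ) ^ (1 / p - 1) = 2 ^ (1 / p) / 2 := by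
    rw [Real.rpow_sub (by norm_num), Real.rpow_one]
  rw [h1, h2, h3, h4, h5, h6, hzp, zero_add, add_zero, hdp, hmid]
  nlinarith [hexp, hexp2]
end

section
/- Let p ≥ 1 and consider a randomized mechanism g for two agents, symmetric about the midpoint, supported on {x₁, m, x₂} (m the midpoint), shift- and scale-invariant, and strategyproof. Then P(g(x) ∈ {x₁, x₂}) ≥ 1/2 for every profile x₁ < x₂. -/
open MeasureTheory

lemma integral_three_points {μ : Measure ℝ} [IsProbabilityMeasure μ] {a b e : ℝ}
    (hab : a ≠ b) (hae : a ≠ e) (hbe : b ≠ e)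
    (h0 : μ ({a, b, e} : Set ℝ)ᶜ = 0) (f : ℝ → ℝ) :
    ∫ y, f y ∂μ = (μ {a}).toReal * f a + (μ {b}).toReal * f b + (μ {e}).toReal * f e := by
  have hmem : ∀ᵐ x ∂μ, x ∈ ({a, b, e} : Set ℝ) := by
    rw [MeasureTheory.ae_iff]
    convert h0 using 2
    rfl
  have hrestr : μ.restrict ({a, b, e} : Set ℝ) = μ :=
    Measure.restrict_eq_self_of_ae_mem hmem
  have hcoe : (({a, b, e} : Finset ℝ) : Set ℝ) = ({a, b, e} : Set ℝ) := by
    simp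
  have := integral_finset (μ := μ) ({a, b, e} : Finset ℝ) (f := f) IntegrableOn.finset
  rw [hcoe, hrestr] at this
  rw [this]
  rw [Finset.sum_insert (by simp [hab, hae]), Finset.sum_insert (by simp [hbe]),
    Finset.sum_singleton]
  simp only [smul_eq_mul, measureReal_def]; ring

lemma mass_sum_three {μ : Measure ℝ} [IsProbabilityMeasure μ] {a b e : ℝ}
    (hab : a ≠ b) (hae : a ≠ e) (hbe : b ≠ e)
    (h0 : μ ({a, b, e} : Set ℝ)ᶜ = 0) :
    (μ {a}).toReal + (μ {b}).toReal + (μ {e}).toReal = 1 := by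
  have := integral_three_points hab hae hbe h0 (fun _ => (1 : ℝ))
  simpa using this.symm

theorem endpoint_mass_at_least_half (p : ℝ) (hp : 1 ≤ p)
    (g : ℝ → ℝ → Measure ℝ)
    (hprob : ∀ x₁ x₂ : ℝ, IsProbabilityMeasure (g x₁ x₂))
    (hsupp : ∀ x₁ x₂ : ℝ, x₁ < x₂ →
      g x₁ x₂ ({x₁, (x₁ + x₂) / 2, x₂} : Set ℝ)ᶜ = 0)
    (hsym : ∀ x₁ x₂ t : ℝ, x₁ < x₂ →
      g x₁ x₂ {y | (x₁ + x₂) / 2 + t ≤ y} = g x₁ x₂ {y | y ≤ (x₁ + x₂) / 2 - t})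
    (hshift : ∀ x₁ x₂ c : ℝ, g (x₁ + c) (x₂ + c) = Measure.map (· + c) (g x₁ x₂))
    (hscale : ∀ x₁ x₂ c : ℝ, 0 < c → g (c * x₁) (c * x₂) = Measure.map (c * ·) (g x₁ x₂))
    (hsp1 : ∀ x₁ x₂ x₁' : ℝ,
      ∫ y, |y - x₁| ∂(g x₁ x₂) ≤ ∫ y, |y - x₁| ∂(g x₁' x₂))
    (hsp2 : ∀ x₁ x₂ x₂' : ℝ,
      ∫ y, |y - x₂| ∂(g x₁ x₂) ≤ ∫ y, |y - x₂| ∂(g x₁ x₂')) :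
    ∀ x₁ x₂ : ℝ, x₁ < x₂ → 1 / 2 ≤ (g x₁ x₂ ({x₁, x₂} : Set ℝ)).toReal := by
  intro x₁ x₂ hlt
  haveI := hprob x₁ x₂
  set μ := g x₁ x₂ with hμ
  set m : ℝ := (x₁ + x₂) / 2 with hm
  set d : ℝ := x₂ - x₁ with hd
  have hd0 : 0 < d := by simp [hd]; linarith
  have h1m : x₁ < m := by rw [hm]; linarith
  have hmx2 : m < x₂ := by rw [hm]; linarith
  have h0 : μ ({x₁, m, x₂} : Set ℝ)ᶜ = 0 := hsupp x₁ x₂ hlt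
  -- symmetry: μ {x₁} = μ {x₂}
  have hray : μ {y | x₂ ≤ y} = μ {y | y ≤ x₁} := by
    have := hsym x₁ x₂ (d / 2) hlt
    have e1 : (x₁ + x₂) / 2 + d / 2 = x₂ := by rw [hd]; ring
    have e2 : (x₁ + x₂) / 2 - d / 2 = x₁ := by rw [hd]; ring
    rwa [e1, e2] at this
  have hray_pt : ∀ (s : Set ℝ) (z : ℝ), z ∈ ({x₁, m, x₂} : Set ℝ) →
      ({z} : Set ℝ) ⊆ s → (s ∩ {x₁, m, x₂} ⊆ {z}) → μ s = μ {z} := by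
    intro s z hz hsub hcap
    refine le_antisymm ?_ (measure_mono hsub)
    have hss : s ⊆ {z} ∪ ({x₁, m, x₂} : Set ℝ)ᶜ := by
      intro y hy
      by_cases hy2 : y ∈ ({x₁, m, x₂} : Set ℝ)
      · exact Or.inl (hcap ⟨hy, hy2⟩)
      · exact Or.inr hy2
    calc μ s ≤ μ ({z} ∪ ({x₁, m, x₂} : Set ℝ)ᶜ) := measure_mono hss
      _ ≤ μ {z} + μ (({x₁, m, x₂} : Set ℝ)ᶜ) := measure_union_le _ _
      _ = μ {z} := by rw [h0, add_zero]
  have hA2 : μ {y | x₂ ≤ y} = μ {x₂} := by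
    apply hray_pt
    · simp
    · intro y hy; simp at hy; simp [hy]
    · rintro y ⟨hy1, hy2⟩
      simp only [Set.mem_setOf_eq] at hy1
      simp only [Set.mem_insert_iff, Set.mem_singleton_iff] at hy2 ⊢
      rcases hy2 with h | h | h <;> [skip; skip; exact h] <;> subst h <;> linarith
  have hA1 : μ {y | y ≤ x₁} = μ {x₁} := by
    apply hray_pt
    · simp
    · intro y hy; simp at hy; simp [hy]
    · rintro y ⟨hy1, hy2⟩
      simp only [Set.mem_setOf_eq] at hy1
      simp only [Set.mem_insert_iff, Set.mem_singleton_iff] at hy2 ⊢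
      rcases hy2 with h | h | h <;> [exact h; skip; skip] <;> subst h <;> linarith
  have hsymm : μ {x₂} = μ {x₁} := by rw [← hA1, ← hA2, hray]
  set A : ℝ := (μ {x₁}).toReal with hA
  set B : ℝ := (μ {m}).toReal with hB
  have hCA : (μ {x₂}).toReal = A := by rw [hA, hsymm]
  have hne1 : x₁ ≠ m := ne_of_lt h1m
  have hne2 : x₁ ≠ x₂ := ne_of_lt hlt
  have hne3 : m ≠ x₂ := ne_of_lt hmx2
  have hsum : A + B + A = 1 := by
    have := mass_sum_three hne1 hne2 hne3 h0
    rw [hCA] at this; exact this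
  -- the deviated measure
  set x₁' : ℝ := 2 * x₁ - x₂ with hx₁'
  have hlt' : x₁' < x₂ := by rw [hx₁']; linarith
  set μ' := g x₁' x₂ with hμ'
  haveI := hprob x₁' x₂
  have hmap : μ' = Measure.map (fun y => 2 * y + (-x₂)) μ := by
    have h1 : g (2 * x₁ + (-x₂)) (2 * x₂ + (-x₂)) = Measure.map (· + (-x₂)) (g (2 * x₁) (2 * x₂)) :=
      hshift (2 * x₁) (2 * x₂) (-x₂)
    have h2 : g (2 * x₁) (2 * x₂) = Measure.map (2 * ·) μ := hscale x₁ x₂ 2 (by norm_num)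
    have e1 : 2 * x₁ + (-x₂) = x₁' := by rw [hx₁']; ring
    have e2 : 2 * x₂ + (-x₂) = x₂ := by ring
    rw [e1, e2, h2] at h1
    rw [hμ', h1, Measure.map_map (measurable_add_const _) (measurable_const_mul _)]
    rfl
  have hmeas : Measurable (fun y : ℝ => 2 * y + (-x₂)) :=
    (measurable_const_mul 2).add_const _
  have hpre : ∀ z w : ℝ, 2 * w + (-x₂) = z →
      μ' ({z} : Set ℝ) = μ ({w} : Set ℝ) := by
    intro z w hw
    rw [hmap, Measure.map_apply hmeas (measurableSet_singleton z)]
    congr 1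
    ext y
    simp only [Set.mem_preimage, Set.mem_singleton_iff]
    constructor
    · intro h; nlinarith [h, hw]
    · intro h; subst h; exact hw
  have hm1 : μ' {x₁'} = μ {x₁} := hpre _ _ (by rw [hx₁']; ring)
  have hm2 : μ' {x₁} = μ {m} := hpre _ _ (by rw [hm]; ring)
  have hm3 : μ' {x₂} = μ {x₂} := hpre _ _ (by ring)
  -- support of μ'
  have h0' : μ' (({x₁', (x₁' + x₂) / 2, x₂} : Set ℝ))ᶜ = 0 := hsupp x₁' x₂ hlt'
  have hmid' : (x₁' + x₂) / 2 = x₁ := by rw [hx₁']; ring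
  rw [hmid'] at h0'
  -- integrals
  have hne1' : x₁' ≠ x₁ := by rw [hx₁']; intro h; apply hne2; linarith
  have hne2' : x₁' ≠ x₂ := ne_of_lt hlt'
  have hIL : ∫ y, |y - x₁| ∂μ =
      A * |x₁ - x₁| + B * |m - x₁| + (μ {x₂}).toReal * |x₂ - x₁| :=
    integral_three_points hne1 hne2 hne3 h0 (fun y => |y - x₁|)
  have hIR : ∫ y, |y - x₁| ∂μ' =
      (μ' {x₁'}).toReal * |x₁' - x₁| + (μ' {x₁}).toReal * |x₁ - x₁|
        + (μ' {x₂}).toReal * |x₂ - x₁| :=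
    integral_three_points hne1' hne2' hne2 h0' (fun y => |y - x₁|)
  have habs1 : |x₁ - x₁| = 0 := by simp
  have habs2 : |m - x₁| = d / 2 := by
    rw [abs_of_nonneg (by linarith), hm, hd]; ring
  have habs3 : |x₂ - x₁| = d := by rw [abs_of_nonneg (by linarith), hd]
  have habs4 : |x₁' - x₁| = d := by
    rw [abs_of_nonpos (by rw [hx₁']; linarith), hx₁', hd]; ring
  have hsp := hsp1 x₁ x₂ x₁'
  rw [hIL, hIR, hm1, hm2, hm3, habs1, habs2, habs3, habs4, hCA] at hsp
  -- hsp : A * 0 + B * (d/2) + A * d ≤ A * d + B * 0 + A * d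
  have hAq : 1 / 4 ≤ A := by nlinarith [hsp, hsum, hd0]
  -- final: μ {x₁, x₂} = μ {x₁} + μ {x₂}
  have hdisj : Disjoint ({x₁} : Set ℝ) {x₂} := by
    simp [Set.disjoint_singleton, hne2]
  have hunion : μ ({x₁, x₂} : Set ℝ) = μ {x₁} + μ {x₂} := by
    rw [Set.insert_eq]
    exact measure_union hdisj (measurableSet_singleton x₂)
  have hfin1 : μ {x₁} ≠ ⊤ := measure_ne_top μ _
  have hfin2 : μ {x₂} ≠ ⊤ := measure_ne_top μ _
  rw [hunion, ENNReal.toReal_add hfin1 hfin2]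
  rw [← hA, hCA]
  linarith
end
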